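/- For every tree T on n ≥ 2 vertices, pc_opt'(T) = n − 1 − α'(T), where pc_opt'(T) is the minimum number of edges that must be recolored (with arbitrarily many new colors) to make the monochromatic tree properly connected. -/

import Mathlib

open SimpleGraph

/-- A walk is properly colored: no two consecutive edges share a color. -/
def ProperWalk {V : Type*} {G : SimpleGraph V} (c : Sym2 V → ℕ) {u v : V} (p : G.Walk u v) : Prop :=
  (p.edges.map c).Chain' (· ≠ ·)

/-- An edge-colored graph is properly connected. -/
def ProperlyConnected {V : Type*} (G : SimpleGraph V) (c : Sym2 V → ℕ) : Prop :=
  ∀ u v : V, u ≠ v → ∃ p : G.Walk u v, p.IsPath ∧ ProperWalk c p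

/-- Number of edges recolored away from the base color 0. -/
noncomputable def numRecolored {V : Type*} (G : SimpleGraph V) (c : Sym2 V → ℕ) : ℕ :=
  {e | e ∈ G.edgeSet ∧ c e ≠ 0}.ncard

/-- Number of new colors used. -/
noncomputable def numNewColors {V : Type*} (G : SimpleGraph V) (c : Sym2 V → ℕ) : ℕ :=
  (c '' {e | e ∈ G.edgeSet ∧ c e ≠ 0}).ncard

/-- Optimal proper connection number: minimum of p + q. -/
noncomputable def pcOpt {V : Type*} (G : SimpleGraph V) : ℕ :=
  sInf { n | ∃ c : Sym2 V → ℕ, ProperlyConnected G c ∧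
    n = numRecolored G c + numNewColors G c }

/-- Maximum matching size. -/
noncomputable def matchingNum {V : Type*} (G : SimpleGraph V) : ℕ :=
  sSup { n | ∃ M : SimpleGraph.Subgraph G, M.IsMatching ∧ n = M.edgeSet.ncard }

/-- Maximum degree. -/
noncomputable def maxDeg {V : Type*} (G : SimpleGraph V) : ℕ :=
  sSup { d | ∃ v : V, d = (G.neighborSet v).ncard }

/-- Variant counting only the number of recolored edges. -/
noncomputable def pcOpt' {V : Type*} (G : SimpleGraph V) : ℕ :=
  sInf { p | ∃ c : Sym2 V → ℕ, ProperlyConnected G c ∧ p = numRecolored G c }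

/-- A "proper coloring": adjacent edges with distinct endpoints get different colors. -/
def PColoring {V : Type*} (G : SimpleGraph V) (c : Sym2 V → ℕ) : Prop :=
  ∀ ⦃a b d : V⦄, G.Adj a b → G.Adj b d → a ≠ d → c s(a,b) ≠ c s(b,d)

lemma path_proper {V : Type*} {G : SimpleGraph V} {c : Sym2 V → ℕ} (hc : PColoring G c) :
    ∀ {u v : V} (p : G.Walk u v), p.IsPath → ProperWalk c p := by
  intro u v p
  induction p with
  | nil => intro _; simp [ProperWalk, List.Chain']
  | @cons a b w h q ih =>
    intro hp
    cases q with
    | nil => simp [ProperWalk, List.Chain']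
    | @cons _ x _ h' r =>
      have hq := hp.of_cons
      have := ih hq
      have hax : a ≠ x := by
        have hns : a ∉ (Walk.cons h' r).support := ((Walk.cons_isPath_iff _ _).mp hp).2
        rintro rfl
        exact hns (by simp)
      have hne := hc h h' hax
      simpa [ProperWalk, List.Chain', List.isChain_cons_cons] using ⟨hne, this⟩

lemma tree_pc_proper {V : Type*} {T : SimpleGraph V} (hT : T.IsTree) {c : Sym2 V → ℕ}
    (h : ProperlyConnected T c) : PColoring T c := by
  intro a b d hab hbd had hc
  have hpath : (Walk.cons hab (Walk.cons hbd Walk.nil)).IsPath := by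
    simp [Walk.isPath_def, Walk.support_cons]
    exact ⟨⟨hab.ne, had⟩, hbd.ne⟩
  obtain ⟨p, hp, hpw⟩ := h a d had
  have heq : p = Walk.cons hab (Walk.cons hbd Walk.nil) :=
    (hT.existsUnique_path a d).unique hp hpath
  rw [heq] at hpw
  simp [ProperWalk, List.Chain', Walk.edges_cons, List.isChain_cons_cons] at hpw
  exact hpw hc

/-- The subgraph of edges colored 0. -/
def zeroSub {V : Type*} (G : SimpleGraph V) (c : Sym2 V → ℕ) : G.Subgraph where
  verts := {v | ∃ w, G.Adj v w ∧ c s(v,w) = 0}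
  Adj v w := G.Adj v w ∧ c s(v,w) = 0
  adj_sub h := h.1
  edge_vert h := ⟨_, h⟩
  symm := by
    constructor
    rintro v w ⟨h1, h2⟩
    exact ⟨h1.symm, by rwa [Sym2.eq_swap]⟩

theorem stmt17 {V : Type*} [Fintype V] (T : SimpleGraph V) (hT : T.IsTree)
    (hn : 2 ≤ Fintype.card V) :
    pcOpt' T = Fintype.card V - 1 - matchingNum T := by
  classical
  set n := Fintype.card V with hndef
  -- edge count of the tree
  have hE : T.edgeSet.ncard = n - 1 := by
    have h1 := hT.card_edgeFinset
    have h2 : T.edgeFinset.card = T.edgeSet.toFinset.card := rfl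
    rw [Set.ncard_eq_toFinset_card' T.edgeSet]
    omega
  -- the matching number is attained
  have hbdd : BddAbove { k | ∃ M : SimpleGraph.Subgraph T, M.IsMatching ∧ k = M.edgeSet.ncard } := by
    refine ⟨Fintype.card (Sym2 V), ?_⟩
    rintro k ⟨M, _, rfl⟩
    calc M.edgeSet.ncard ≤ (Set.univ : Set (Sym2 V)).ncard :=
          Set.ncard_le_ncard (Set.subset_univ _) Set.finite_univ
      _ = Fintype.card (Sym2 V) := by simp [Set.ncard_univ]
  have hne0 : (0 : ℕ) ∈ { k | ∃ M : SimpleGraph.Subgraph T, M.IsMatching ∧ k = M.edgeSet.ncard } := by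
    refine ⟨⊥, ?_, by simp⟩
    intro v hv
    simp [Subgraph.verts_bot] at hv
  have hmem := Nat.sSup_mem ⟨0, hne0⟩ hbdd
  obtain ⟨M, hM, hMcard⟩ := hmem
  set m := matchingNum T with hmdef
  have hm' : m = M.edgeSet.ncard := by rw [hmdef]; exact hMcard
  have hMsub : M.edgeSet ⊆ T.edgeSet := M.edgeSet_subset
  have hmle : m ≤ n - 1 := by
    rw [hm', ← hE]
    exact Set.ncard_le_ncard hMsub T.edgeSet.toFinite
  -- the good coloring: recolor all edges outside a maximum matching with distinct colors
  obtain ⟨f, hf⟩ := Countable.exists_injective_nat (Sym2 V)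
  set c : Sym2 V → ℕ := fun e => if e ∈ M.edgeSet then 0 else f e + 1 with hcdef
  have hcprop : PColoring T c := by
    intro a b d hab hbd had
    have hedne : s(a,b) ≠ s(b,d) := by
      intro hh
      rw [Sym2.eq_iff] at hh
      rcases hh with ⟨rfl, rfl⟩ | ⟨rfl, -⟩
      · exact had rfl
      · exact had rfl
    simp only [hcdef]
    split_ifs with h1 h2 h2
    · -- both in the matching: contradiction
      exfalso
      have hba : M.Adj b a := (Subgraph.mem_edgeSet.mp h1).symm
      have hbd' : M.Adj b d := Subgraph.mem_edgeSet.mp h2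
      have hb : b ∈ M.verts := hba.fst_mem
      obtain ⟨w, -, huniq⟩ := hM hb
      exact had ((huniq a hba).symm ▸ (huniq d hbd') ▸ rfl)
    · simp
    · simp
    · simp only [ne_eq, Nat.succ_ne_succ]
      exact fun hfe => hedne (hf hfe)
  have hpc : ProperlyConnected T c := by
    intro u v _
    obtain ⟨p, hp⟩ := (hT.existsUnique_path u v).exists
    exact ⟨p, hp, path_proper hcprop p hp⟩
  have hcount : numRecolored T c = n - 1 - m := by
    have hset : {e | e ∈ T.edgeSet ∧ c e ≠ 0} = T.edgeSet \ M.edgeSet := by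
      ext e
      simp only [Set.mem_setOf_eq, Set.mem_diff, hcdef]
      constructor
      · rintro ⟨he, hne⟩
        refine ⟨he, fun hm => hne (by simp [hm])⟩
      · rintro ⟨he, hm⟩
        exact ⟨he, by simp [hm]⟩
    rw [numRecolored, hset, Set.ncard_diff hMsub (Set.toFinite M.edgeSet), hE, ← hm']
  have hmemInf : (n - 1 - m) ∈
      { p | ∃ c : Sym2 V → ℕ, ProperlyConnected T c ∧ p = numRecolored T c } :=
    ⟨c, hpc, hcount.symm⟩
  refine le_antisymm (Nat.sInf_le hmemInf) (le_csInf ⟨_, hmemInf⟩ ?_)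
  rintro p ⟨c', hpc', rfl⟩
  -- lower bound: zero-colored edges form a matching
  have hprop' := tree_pc_proper hT hpc'
  set Z := zeroSub T c' with hZdef
  have hZmatch : Z.IsMatching := by
    rintro v ⟨w, hw, hw0⟩
    refine ⟨w, ⟨hw, hw0⟩, ?_⟩
    rintro y ⟨hy, hy0⟩
    by_contra hyw
    have := hprop' hy.symm hw hyw
    apply this
    rw [Sym2.eq_swap, hy0, hw0]
  have hZedge : Z.edgeSet = {e | e ∈ T.edgeSet ∧ c' e = 0} := by
    ext e
    induction e using Sym2.ind with
    | _ x y => simp [hZdef, zeroSub, Subgraph.mem_edgeSet, Set.mem_setOf_eq, mem_edgeSet]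
  have hzle : Z.edgeSet.ncard ≤ m := le_csSup hbdd ⟨Z, hZmatch, rfl⟩
  have hpart : numRecolored T c' + Z.edgeSet.ncard = n - 1 := by
    rw [hZedge, numRecolored, ← Set.ncard_union_eq ?disj (Set.toFinite _) (Set.toFinite _)]
    case disj =>
      rw [Set.disjoint_left]
      rintro e ⟨-, hne⟩ ⟨-, he0⟩
      exact hne he0
    have : {e | e ∈ T.edgeSet ∧ c' e ≠ 0} ∪ {e | e ∈ T.edgeSet ∧ c' e = 0} = T.edgeSet := by
      ext e
      simp only [Set.mem_union, Set.mem_setOf_eq, SimpleGraph.mem_edgeSet]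
      constructor
      · rintro (⟨h, -⟩ | ⟨h, -⟩) <;> exact h
      · intro h
        by_cases h0 : c' e = 0
        · exact Or.inr ⟨h, h0⟩
        · exact Or.inl ⟨h, h0⟩
    rw [this, hE]
  omega
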